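/- Suppose {a_n}_{n=0}^∞ is a Stieltjes moment sequence with representing measure μ, κ is an integer ≥ 2, and {a_n^{1/κ}}_{n=0}^∞ is a Stieltjes moment sequence with representing measure ν. Suppose ν((α,β)) = 0 for some real α, β with 0 ≤ α < β ≤ γ := sup supp ν < ∞ and α·γ^{κ−1} < β^κ. Set θ1 := α·γ^{κ−1}, θ2 := β^κ, θ3 := γ^κ. Then: (i) μ((θ1,θ2)) = 0 and θ3 = sup supp μ < ∞; (ii) α ∈ supp ν if and only if θ1 ∈ supp μ; (iii) β ∈ supp ν if and only if θ2 ∈ supp μ. -/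

import Mathlib

open MeasureTheory

/-- The closed support of a Borel measure: the set of points all of whose open
neighbourhoods have positive measure. -/
def msupport {X : Type*} [TopologicalSpace X] [MeasurableSpace X] (μ : Measure X) : Set X :=
  {x | ∀ U : Set X, IsOpen U → x ∈ U → 0 < μ U}

/-- `μ` is a representing measure (on `[0,∞)`, modelled as a measure on `ℝ` vanishing on
`(-∞,0)`) of the Stieltjes moment sequence `a`. -/
def IsRepMeas (a : ℕ → ℝ) (μ : Measure ℝ) : Prop :=
  (∀ n, 0 ≤ a n) ∧ μ (Set.Iio 0) = 0 ∧
    ∀ n : ℕ, ∫⁻ x, ENNReal.ofReal (x ^ n) ∂μ = ENNReal.ofReal (a n)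

/-- `a` is a Stieltjes moment sequence. -/
def IsStieltjes (a : ℕ → ℝ) : Prop :=
  ∃ μ : Measure ℝ, IsRepMeas a μ

/-- A Stieltjes moment sequence is determinate if it has a unique representing measure. -/
def IsDeterminate (a : ℕ → ℝ) : Prop :=
  ∀ μ ν : Measure ℝ, IsRepMeas a μ → IsRepMeas a ν → μ = ν

open Set
open scoped ENNReal

lemma msupport_isClosed {X : Type*} [TopologicalSpace X] [MeasurableSpace X] (μ : Measure X) :
    IsClosed (msupport μ) := by
  rw [← isOpen_compl_iff, isOpen_iff_forall_mem_open]
  intro x hx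
  simp only [msupport, mem_compl_iff, mem_setOf_eq, not_forall] at hx
  obtain ⟨U, hU, hxU, hpos⟩ := hx
  refine ⟨U, fun y hy hmem => ?_, hU, hxU⟩
  exact absurd (hmem U hU hy) hpos

/-- an open set disjoint from the support is null (second countable). -/
lemma null_of_disjoint_msupport {X : Type*} [TopologicalSpace X] [MeasurableSpace X]
    [SecondCountableTopology X] (μ : Measure X) {U : Set X} (hU : IsOpen U)
    (h : Disjoint U (msupport μ)) : μ U = 0 := by
  have : ∀ x ∈ U, ∃ V : Set X, IsOpen V ∧ x ∈ V ∧ μ V = 0 := by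
    intro x hx
    have hx' : x ∉ msupport μ := fun hmem => h.ne_of_mem hx hmem rfl
    simp only [msupport, mem_setOf_eq, not_forall] at hx'
    obtain ⟨V, hV, hxV, hpos⟩ := hx'
    exact ⟨V, hV, hxV, by simpa using hpos⟩
  choose! V hVopen hVmem hVnull using this
  obtain ⟨T, hTc, hTsub, hTun⟩ := TopologicalSpace.isOpen_sUnion_countable
    (V '' U) (by rintro s ⟨x, hx, rfl⟩; exact hVopen x hx)
  have hUsub : U ⊆ ⋃₀ T := by
    rw [hTun]
    intro x hx
    exact ⟨V x, ⟨x, hx, rfl⟩, hVmem x hx⟩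
  refine le_antisymm ?_ (by simp)
  calc μ U ≤ μ (⋃₀ T) := measure_mono hUsub
    _ = 0 := by
      refine (measure_sUnion_null_iff hTc).2 ?_
      intro s hs
      obtain ⟨x, hx, rfl⟩ := hTsub hs
      exact hVnull x hx

/-- if μ vanishes on the complement of a closed set C, the support is contained in C -/
lemma msupport_subset_of_null_compl {X : Type*} [TopologicalSpace X] [MeasurableSpace X]
    {μ : Measure X} {C : Set X} (hC : IsClosed C) (h : μ Cᶜ = 0) : msupport μ ⊆ C := by
  intro x hx
  by_contra hxC
  have := hx Cᶜ hC.isOpen_compl hxC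
  rw [h] at this
  exact lt_irrefl _ this

lemma msupport_nonempty_of_isLUB {μ : Measure ℝ} {γ : ℝ} (h : IsLUB (msupport μ) γ) :
    (msupport μ).Nonempty := by
  by_contra hne
  rw [not_nonempty_iff_eq_empty] at hne
  rw [hne] at h
  obtain ⟨-, hlb⟩ := h
  have : γ ≤ γ - 1 := hlb (by simp [upperBounds_empty])
  linarith

lemma mem_msupport_of_isLUB {μ : Measure ℝ} {γ : ℝ} (h : IsLUB (msupport μ) γ) :
    γ ∈ msupport μ := by
  have := (msupport_isClosed μ).closure_subset
  exact this (h.mem_closure (msupport_nonempty_of_isLUB h))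
open scoped ENNReal
open scoped ENNReal

lemma hmom (n : ℕ) : Measurable fun x : ℝ => ENNReal.ofReal (x ^ n) := by measurability
noncomputable def mconv (σ τ : Measure ℝ) : Measure ℝ :=
  Measure.map (fun p : ℝ × ℝ => p.1 * p.2) (σ.prod τ)

noncomputable def mpow (ν : Measure ℝ) : ℕ → Measure ℝ
  | 0 => Measure.dirac 1
  | (k+1) => mconv ν (mpow ν k)

lemma measurable_mulfun : Measurable (fun p : ℝ × ℝ => p.1 * p.2) :=
  measurable_fst.mul measurable_snd

lemma mconv_finite (σ τ : Measure ℝ) [IsFiniteMeasure σ] [IsFiniteMeasure τ] :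
    IsFiniteMeasure (mconv σ τ) := by
  constructor
  rw [mconv, Measure.map_apply measurable_mulfun MeasurableSet.univ]
  exact lt_of_le_of_lt (measure_mono (subset_univ _)) (measure_lt_top _ _)

lemma mpow_finite (ν : Measure ℝ) [IsFiniteMeasure ν] (k : ℕ) :
    IsFiniteMeasure (mpow ν k) := by
  induction k with
  | zero => rw [mpow]; infer_instance
  | succ k ih => rw [mpow]; exact @mconv_finite ν (mpow ν k) _ ih

lemma mconv_null (σ τ : Measure ℝ) [SFinite τ] {A B E : Set ℝ}
    (hE : MeasurableSet E) (hA : MeasurableSet A) (hB : MeasurableSet B)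
    (hσ : σ Aᶜ = 0) (hτ : τ Bᶜ = 0)
    (h : ∀ x ∈ A, ∀ y ∈ B, x * y ∉ E) : mconv σ τ E = 0 := by
  rw [mconv, Measure.map_apply measurable_mulfun hE]
  have hsub : (fun p : ℝ × ℝ => p.1 * p.2) ⁻¹' E ⊆ (Aᶜ ×ˢ univ) ∪ (univ ×ˢ Bᶜ) := by
    rintro ⟨x, y⟩ hxy
    by_cases hx : x ∈ A
    · by_cases hy : y ∈ B
      · exact absurd hxy (h x hx y hy)
      · exact Or.inr ⟨trivial, hy⟩
    · exact Or.inl ⟨hx, trivial⟩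
  refine measure_mono_null hsub ?_
  refine measure_union_null ?_ ?_
  · rw [Measure.prod_prod, hσ, zero_mul]
  · rw [Measure.prod_prod, hτ, mul_zero]

lemma mconv_moment (σ τ : Measure ℝ) [SFinite σ] [SFinite τ] (hσ : σ (Iio 0) = 0) (n : ℕ) :
    ∫⁻ x, ENNReal.ofReal (x ^ n) ∂(mconv σ τ)
      = (∫⁻ x, ENNReal.ofReal (x ^ n) ∂σ) * ∫⁻ x, ENNReal.ofReal (x ^ n) ∂τ := by
  have hf : Measurable fun x : ℝ => ENNReal.ofReal (x ^ n) := hmom n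
  rw [mconv, lintegral_map hf measurable_mulfun,
    lintegral_prod (fun p : ℝ × ℝ => ENNReal.ofReal ((p.1 * p.2) ^ n))
      (by measurability : Measurable fun p : ℝ × ℝ => ENNReal.ofReal ((p.1 * p.2) ^ n)).aemeasurable]
  have hae : ∀ᵐ x ∂σ, 0 ≤ x := by
    rw [ae_iff]
    simp only [not_le]; exact hσ
  calc ∫⁻ x, ∫⁻ y, ENNReal.ofReal ((x * y) ^ n) ∂τ ∂σ
      = ∫⁻ x, ENNReal.ofReal (x ^ n) * ∫⁻ y, ENNReal.ofReal (y ^ n) ∂τ ∂σ := by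
        refine lintegral_congr_ae ?_
        filter_upwards [hae] with x hx
        rw [← lintegral_const_mul _ hf]
        congr 1 with y
        rw [mul_pow, ENNReal.ofReal_mul (by positivity)]
    _ = _ := lintegral_mul_const _ hf

lemma mpow_moment (ν : Measure ℝ) [IsFiniteMeasure ν] (hν0 : ν (Iio 0) = 0) (k n : ℕ) :
    ∫⁻ x, ENNReal.ofReal (x ^ n) ∂(mpow ν k) = (∫⁻ x, ENNReal.ofReal (x ^ n) ∂ν) ^ k := by
  induction k with
  | zero =>
      rw [mpow, pow_zero, lintegral_dirac' _ (hmom n)]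
      simp
  | succ k ih =>
      have : SFinite (mpow ν k) := by haveI := mpow_finite ν k; infer_instance
      rw [mpow, mconv_moment ν (mpow ν k) hν0 n, ih, pow_succ']

lemma mem_msupport_mconv {σ τ : Measure ℝ} [SFinite τ] {x y : ℝ}
    (hx : x ∈ msupport σ) (hy : y ∈ msupport τ) : x * y ∈ msupport (mconv σ τ) := by
  intro U hU hmem
  rw [mconv, Measure.map_apply measurable_mulfun hU.measurableSet]
  have hop : IsOpen ((fun p : ℝ × ℝ => p.1 * p.2) ⁻¹' U) := hU.preimage continuous_mul
  have hmem' : (x, y) ∈ (fun p : ℝ × ℝ => p.1 * p.2) ⁻¹' U := hmem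
  obtain ⟨V, W, hV, hW, hxV, hyW, hsub⟩ := isOpen_prod_iff.1 hop x y hmem'
  calc (0:ℝ≥0∞) < σ V * τ W :=
        ENNReal.mul_pos (hx V hV hxV).ne' (hy W hW hyW).ne'
    _ = σ.prod τ (V ×ˢ W) := (Measure.prod_prod V W).symm
    _ ≤ _ := measure_mono hsub
lemma dirac_one_compl : Measure.dirac (1:ℝ) ({(1:ℝ)}ᶜ) = 0 := by
  rw [Measure.dirac_apply' _ (MeasurableSet.singleton 1).compl]
  simp

lemma mpow_concentration (ν : Measure ℝ) [IsFiniteMeasure ν] {a' b' γ : ℝ}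
    (hγ0 : 0 ≤ γ) (ha'γ : a' ≤ γ) (hb'0 : 0 ≤ b')
    (hν : ν ((Icc 0 a' ∪ Icc b' γ)ᶜ) = 0) (m : ℕ) :
    mpow ν (m+1) ((Icc 0 (a' * γ ^ m) ∪ Icc (b' ^ (m+1)) (γ ^ (m+1)))ᶜ) = 0 := by
  induction m with
  | zero =>
      rw [mpow, mpow]
      refine mconv_null ν _ (by measurability) (by measurability)
        (MeasurableSet.singleton 1).compl.compl hν (by simpa using dirac_one_compl) ?_
      intro x hx y hy
      simp only [compl_compl, mem_singleton_iff] at hy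
      subst hy
      simp only [mem_compl_iff, not_not, pow_zero, mul_one, zero_add, pow_one]
      exact hx
  | succ m ih =>
      rw [mpow]
      haveI : SFinite (mpow ν (m+1)) := by haveI := mpow_finite ν (m+1); infer_instance
      refine mconv_null ν (mpow ν (m+1)) (by measurability) (by measurability)
        (by measurability) hν ih ?_
      intro x hx y hy
      simp only [mem_compl_iff, not_not] at hy ⊢
      have hγm : (0:ℝ) ≤ γ ^ m := pow_nonneg hγ0 m
      have hγm1 : (0:ℝ) ≤ γ ^ (m+1) := pow_nonneg hγ0 (m+1)
      have haγ : a' * γ ^ m ≤ γ ^ (m+1) := by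
        rw [pow_succ']
        exact mul_le_mul_of_nonneg_right ha'γ hγm
      rcases hx with hx | hx
      · -- x ∈ [0, a']
        have ha'0 : (0:ℝ) ≤ a' := le_trans hx.1 hx.2
        have hy' : 0 ≤ y ∧ y ≤ γ ^ (m+1) := by
          rcases hy with hy | hy
          · exact ⟨hy.1, le_trans hy.2 haγ⟩
          · exact ⟨le_trans (pow_nonneg hb'0 _) hy.1, hy.2⟩
        refine Or.inl ⟨mul_nonneg hx.1 hy'.1, ?_⟩
        exact mul_le_mul hx.2 hy'.2 hy'.1 ha'0
      · -- x ∈ [b', γ]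
        have hx0 : (0:ℝ) ≤ x := le_trans hb'0 hx.1
        rcases hy with hy | hy
        · refine Or.inl ⟨mul_nonneg hx0 hy.1, ?_⟩
          calc x * y ≤ γ * (a' * γ ^ m) := mul_le_mul hx.2 hy.2 hy.1 hγ0
            _ = a' * γ ^ (m+1) := by rw [pow_succ]; ring
        · refine Or.inr ⟨?_, ?_⟩
          · calc b' ^ (m+1+1) = b' * b' ^ (m+1) := by rw [pow_succ']
              _ ≤ x * y := mul_le_mul hx.1 hy.1 (pow_nonneg hb'0 _) hx0
          · calc x * y ≤ γ * γ ^ (m+1) :=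
                  mul_le_mul hx.2 hy.2 (le_trans (pow_nonneg hb'0 _) hy.1) hγ0
              _ = γ ^ (m+1+1) := by ring

lemma one_mem_msupport_dirac : (1:ℝ) ∈ msupport (Measure.dirac (1:ℝ)) := by
  intro U hU h1
  rw [Measure.dirac_apply' _ hU.measurableSet]
  simp [indicator, h1]

lemma pow_mem_msupport_mpow (ν : Measure ℝ) [IsFiniteMeasure ν] {c : ℝ}
    (hc : c ∈ msupport ν) (k : ℕ) : c ^ k ∈ msupport (mpow ν k) := by
  induction k with
  | zero => rw [pow_zero, mpow]; exact one_mem_msupport_dirac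
  | succ k ih =>
      rw [pow_succ', mpow]
      haveI : SFinite (mpow ν k) := by haveI := mpow_finite ν k; infer_instance
      exact mem_msupport_mconv hc ih

lemma mul_pow_mem_msupport_mpow (ν : Measure ℝ) [IsFiniteMeasure ν] {c d : ℝ}
    (hc : c ∈ msupport ν) (hd : d ∈ msupport ν) (m : ℕ) :
    c * d ^ m ∈ msupport (mpow ν (m+1)) := by
  rw [mpow]
  haveI : SFinite (mpow ν m) := by haveI := mpow_finite ν m; infer_instance
  exact mem_msupport_mconv hc (pow_mem_msupport_mpow ν hd m)

lemma tail_null (ρ : Measure ℝ) [IsFiniteMeasure ρ] {M R : ℝ} (hR : 0 < R) (hM : 0 ≤ M)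
    (hmo : ∀ n : ℕ, ∫⁻ x, ENNReal.ofReal (x ^ n) ∂ρ ≤ ENNReal.ofReal (M * R ^ n)) :
    ρ (Ioi R) = 0 := by
  have key : ∀ t : ℝ, R < t → ρ (Ioi t) = 0 := by
    intro t ht
    have ht0 : 0 < t := lt_trans hR ht
    set c := (ρ (Ioi t)).toReal with hc
    have hb : ∀ n : ℕ, c * t ^ n ≤ M * R ^ n := by
      intro n
      have h1 : ENNReal.ofReal (t ^ n) * ρ (Ioi t) ≤ ∫⁻ x, ENNReal.ofReal (x ^ n) ∂ρ := by
        rw [← setLIntegral_const (Ioi t) _]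
        calc ∫⁻ _ in Ioi t, ENNReal.ofReal (t ^ n) ∂ρ
            ≤ ∫⁻ x in Ioi t, ENNReal.ofReal (x ^ n) ∂ρ := by
              refine setLIntegral_mono (hmom n) ?_
              intro x hx
              exact ENNReal.ofReal_le_ofReal (pow_le_pow_left₀ ht0.le (le_of_lt hx) n)
          _ ≤ _ := setLIntegral_le_lintegral _ _
      have h2 : ENNReal.ofReal (t ^ n) * ρ (Ioi t) ≤ ENNReal.ofReal (M * R ^ n) :=
        le_trans h1 (hmo n)
      have h3 := ENNReal.toReal_mono (by simp) h2
      rw [ENNReal.toReal_mul, ENNReal.toReal_ofReal (by positivity),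
        ENNReal.toReal_ofReal (by positivity)] at h3
      calc c * t ^ n = t ^ n * c := mul_comm _ _
        _ ≤ M * R ^ n := h3
    have hdiv : ∀ n : ℕ, c ≤ M * (R / t) ^ n := by
      intro n
      rw [div_pow, ← mul_div_assoc, le_div_iff₀ (pow_pos ht0 n)]
      exact hb n
    have htend : Filter.Tendsto (fun n : ℕ => M * (R / t) ^ n) Filter.atTop (nhds 0) := by
      have := tendsto_pow_atTop_nhds_zero_of_lt_one
        (by positivity : (0:ℝ) ≤ R / t) ((div_lt_one ht0).2 ht)
      simpa using this.const_mul M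
    have hc0 : c ≤ 0 := ge_of_tendsto' htend hdiv
    have : c = 0 := le_antisymm hc0 ENNReal.toReal_nonneg
    rcases (ENNReal.toReal_eq_zero_iff _).1 this with h | h
    · exact h
    · exact absurd h (measure_ne_top ρ _)
  have hsub : Ioi R ⊆ ⋃ n : ℕ, Ioi (R + 1 / (n + 1)) := by
    intro x hx
    obtain ⟨n, hn⟩ := exists_nat_one_div_lt (sub_pos.2 hx : (0:ℝ) < x - R)
    exact mem_iUnion.2 ⟨n, by simp only [mem_Ioi]; linarith [hn]⟩
  refine measure_mono_null hsub (measure_iUnion_null fun n => key _ ?_)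
  have : (0:ℝ) < 1 / (n + 1) := by positivity
  linarith

lemma real_moment (ρ : Measure ℝ) [IsFiniteMeasure ρ] (h0 : ρ (Iio 0) = 0) {c : ℝ} (hc : 0 ≤ c)
    (n : ℕ) (h : ∫⁻ x, ENNReal.ofReal (x ^ n) ∂ρ = ENNReal.ofReal c) : ∫ x, x ^ n ∂ρ = c := by
  have hae : ∀ᵐ x ∂ρ, (0:ℝ) ≤ x := by
    rw [ae_iff]; simp only [not_le]; exact h0
  have hae' : (0 : ℝ → ℝ) ≤ᵐ[ρ] fun x => x ^ n := by
    filter_upwards [hae] with x hx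
    exact pow_nonneg hx n
  rw [integral_eq_lintegral_of_nonneg_ae hae' (continuous_pow n).aestronglyMeasurable, h,
    ENNReal.toReal_ofReal hc]

lemma ae_mem_Icc_of_conc (ρ : Measure ℝ) {M : ℝ} (hconc : ρ ((Icc 0 M)ᶜ) = 0) :
    ∀ᵐ x ∂ρ, x ∈ Icc 0 M := by
  rw [ae_iff]
  exact hconc

lemma integrable_continuous_of_conc (ρ : Measure ℝ) [IsFiniteMeasure ρ] {M : ℝ}
    (hconc : ρ ((Icc 0 M)ᶜ) = 0) {f : ℝ → ℝ} (hf : Continuous f) : Integrable f ρ := by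
  obtain ⟨C, hC⟩ := isCompact_Icc.exists_bound_of_continuousOn hf.continuousOn
  refine Integrable.mono' (integrable_const C) hf.aestronglyMeasurable ?_
  filter_upwards [ae_mem_Icc_of_conc ρ hconc] with x hx using hC x hx

lemma ext_of_moments (ρ₁ ρ₂ : Measure ℝ) [IsFiniteMeasure ρ₁] [IsFiniteMeasure ρ₂] {M : ℝ}
    (hM : 0 ≤ M)
    (h₁ : ρ₁ ((Icc 0 M)ᶜ) = 0) (h₂ : ρ₂ ((Icc 0 M)ᶜ) = 0)
    (hmo : ∀ n : ℕ, ∫ x, x ^ n ∂ρ₁ = ∫ x, x ^ n ∂ρ₂) : ρ₁ = ρ₂ := by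
  have hint₁ : ∀ {f : ℝ → ℝ}, Continuous f → Integrable f ρ₁ :=
    fun hf => integrable_continuous_of_conc ρ₁ h₁ hf
  have hint₂ : ∀ {f : ℝ → ℝ}, Continuous f → Integrable f ρ₂ :=
    fun hf => integrable_continuous_of_conc ρ₂ h₂ hf
  -- polynomial moments agree
  have hpoly : ∀ p : Polynomial ℝ, ∫ x, p.eval x ∂ρ₁ = ∫ x, p.eval x ∂ρ₂ := by
    intro p
    induction p using Polynomial.induction_on' with
    | add p q hp hq =>
        simp only [Polynomial.eval_add]
        rw [integral_add (hint₁ p.continuous) (hint₁ q.continuous),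
          integral_add (hint₂ p.continuous) (hint₂ q.continuous), hp, hq]
    | monomial n c =>
        simp only [Polynomial.eval_monomial]
        rw [integral_const_mul, integral_const_mul, hmo n]
  -- continuous functions integrals agree
  have hcont : ∀ f : ℝ → ℝ, Continuous f → ∫ x, f x ∂ρ₁ = ∫ x, f x ∂ρ₂ := by
    intro f hf
    have hmass : (0:ℝ) ≤ (ρ₁ univ).toReal + (ρ₂ univ).toReal := by positivity
    have hkey : ∀ ε : ℝ, 0 < ε →
        |∫ x, f x ∂ρ₁ - ∫ x, f x ∂ρ₂| ≤ ε * ((ρ₁ univ).toReal + (ρ₂ univ).toReal) := by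
      intro ε hε
      -- polynomial approximation on Icc 0 M
      set f' : C(Icc (0:ℝ) M, ℝ) := ⟨fun x => f x, hf.comp continuous_subtype_val⟩ with hf'
      have hmem := continuousMap_mem_polynomialFunctions_closure 0 M f'
      have hmem' : f' ∈ closure ((polynomialFunctions (Icc (0:ℝ) M)) :
          Set C(Icc (0:ℝ) M, ℝ)) := by
        rw [← Subalgebra.topologicalClosure_coe]
        exact hmem
      obtain ⟨g, hg, hdist⟩ := Metric.mem_closure_iff.1 hmem' ε hε
      rw [SetLike.mem_coe, polynomialFunctions, Subalgebra.mem_map] at hg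
      obtain ⟨p, -, rfl⟩ := hg
      have happrox : ∀ x ∈ Icc (0:ℝ) M, |f x - p.eval x| ≤ ε := by
        intro x hx
        have := (ContinuousMap.dist_le hε.le).1 hdist.le ⟨x, hx⟩
        simpa [Real.dist_eq, hf', Polynomial.toContinuousMapOnAlgHom_apply,
          Polynomial.toContinuousMapOn_apply, Polynomial.toContinuousMap_apply] using this
      have hb₁ : |∫ x, f x ∂ρ₁ - ∫ x, p.eval x ∂ρ₁| ≤ ε * (ρ₁ univ).toReal := by
        rw [← integral_sub (hint₁ hf) (hint₁ p.continuous)]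
        have := norm_integral_le_of_norm_le_const (μ := ρ₁)
          (f := fun x => f x - p.eval x) (C := ε) ?_
        · simpa [Real.norm_eq_abs, measureReal_def] using this
        · filter_upwards [ae_mem_Icc_of_conc ρ₁ h₁] with x hx
          simpa [Real.norm_eq_abs] using happrox x hx
      have hb₂ : |∫ x, f x ∂ρ₂ - ∫ x, p.eval x ∂ρ₂| ≤ ε * (ρ₂ univ).toReal := by
        rw [← integral_sub (hint₂ hf) (hint₂ p.continuous)]
        have := norm_integral_le_of_norm_le_const (μ := ρ₂)
          (f := fun x => f x - p.eval x) (C := ε) ?_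
        · simpa [Real.norm_eq_abs, measureReal_def] using this
        · filter_upwards [ae_mem_Icc_of_conc ρ₂ h₂] with x hx
          simpa [Real.norm_eq_abs] using happrox x hx
      have := hpoly p
      calc |∫ x, f x ∂ρ₁ - ∫ x, f x ∂ρ₂|
          = |(∫ x, f x ∂ρ₁ - ∫ x, p.eval x ∂ρ₁) - (∫ x, f x ∂ρ₂ - ∫ x, p.eval x ∂ρ₂)| := by
            rw [hpoly p]; ring_nf
        _ ≤ |∫ x, f x ∂ρ₁ - ∫ x, p.eval x ∂ρ₁| + |∫ x, f x ∂ρ₂ - ∫ x, p.eval x ∂ρ₂| :=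
            abs_sub _ _
        _ ≤ ε * (ρ₁ univ).toReal + ε * (ρ₂ univ).toReal := add_le_add hb₁ hb₂
        _ = ε * ((ρ₁ univ).toReal + (ρ₂ univ).toReal) := by ring
    by_contra hne
    have habs : 0 < |∫ x, f x ∂ρ₁ - ∫ x, f x ∂ρ₂| := abs_pos.2 (sub_ne_zero.2 hne)
    set D := (ρ₁ univ).toReal + (ρ₂ univ).toReal
    have hDpos : (0:ℝ) < D + 1 := by positivity
    have h1 := hkey (|∫ x, f x ∂ρ₁ - ∫ x, f x ∂ρ₂| / (2 * (D + 1))) (by positivity)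
    have h2 : |∫ x, f x ∂ρ₁ - ∫ x, f x ∂ρ₂| / (2 * (D + 1)) * D
        ≤ |∫ x, f x ∂ρ₁ - ∫ x, f x ∂ρ₂| / 2 := by
      rw [div_mul_eq_mul_div, div_le_div_iff₀ (by positivity) (by norm_num)]
      nlinarith [habs.le, hmass]
    linarith
  -- Iic values agree
  refine Measure.ext_of_Iic ρ₁ ρ₂ ?_
  intro t
  set F : ℕ → ℝ → ℝ := fun k x => max 0 (min 1 (1 - k * (x - t))) with hF
  have hFc : ∀ k, Continuous (F k) := by
    intro k
    apply continuous_const.max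
    exact continuous_const.min (by continuity)
  have hFb : ∀ k x, |F k x| ≤ 1 := by
    intro k x
    rw [abs_le]
    constructor
    · simp [hF]
    · simp only [hF, max_le_iff]
      constructor
      · norm_num
      · exact min_le_left _ _
  have hFtend : ∀ x : ℝ, Filter.Tendsto (fun k => F k x) Filter.atTop
      (nhds (indicator (Iic t) (fun _ => (1:ℝ)) x)) := by
    intro x
    by_cases hx : x ≤ t
    · have hcon : ∀ k : ℕ, F k x = 1 := by
        intro k
        have h1 : (1:ℝ) ≤ 1 - k * (x - t) := by
          have : (k:ℝ) * (x - t) ≤ 0 :=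
            mul_nonpos_iff.2 (Or.inl ⟨Nat.cast_nonneg k, by linarith⟩)
          linarith
        rw [hF]
        simp only [min_eq_left h1, max_eq_right (zero_le_one)]
      have hind : indicator (Iic t) (fun _ => (1:ℝ)) x = 1 := indicator_of_mem (mem_Iic.2 hx) _
      rw [hind]
      simp only [hcon]
      exact tendsto_const_nhds
    · push_neg at hx
      have hind : indicator (Iic t) (fun _ => (1:ℝ)) x = 0 :=
        indicator_of_notMem (by simpa using hx.not_ge) _
      rw [hind]
      obtain ⟨N, hN⟩ := exists_nat_ge (1 / (x - t))
      refine tendsto_atTop_of_eventually_const (i₀ := N) ?_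
      intro k hk
      have hxt : (0:ℝ) < x - t := by linarith
      have h1 : (1:ℝ) ≤ k * (x - t) := by
        have hkN : (1 / (x - t)) ≤ (k:ℝ) := le_trans hN (by exact_mod_cast hk)
        calc (1:ℝ) = (1 / (x - t)) * (x - t) := by field_simp
          _ ≤ k * (x - t) := mul_le_mul_of_nonneg_right hkN hxt.le
      have h2 : 1 - (k:ℝ) * (x - t) ≤ 0 := by linarith
      rw [hF]
      simp only [min_eq_right (by linarith : (1:ℝ) - k * (x - t) ≤ 1), max_eq_left h2]
  -- dominated convergence
  have hdc : ∀ (ρ : Measure ℝ) [IsFiniteMeasure ρ], Filter.Tendsto (fun k => ∫ x, F k x ∂ρ)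
      Filter.atTop (nhds (∫ x, indicator (Iic t) (fun _ => (1:ℝ)) x ∂ρ)) := by
    intro ρ _
    refine tendsto_integral_of_dominated_convergence (fun _ => (1:ℝ))
      (fun k => (hFc k).aestronglyMeasurable) (integrable_const 1)
      (fun k => Filter.Eventually.of_forall fun x => ?_)
      (Filter.Eventually.of_forall hFtend)
    simpa [Real.norm_eq_abs] using hFb k x
  have heq : ∀ k, ∫ x, F k x ∂ρ₁ = ∫ x, F k x ∂ρ₂ := fun k => hcont (F k) (hFc k)
  have huniq : (∫ x, indicator (Iic t) (fun _ => (1:ℝ)) x ∂ρ₁)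
      = ∫ x, indicator (Iic t) (fun _ => (1:ℝ)) x ∂ρ₂ := by
    refine tendsto_nhds_unique ?_ (hdc ρ₂)
    exact (hdc ρ₁).congr heq
  have hi : ∀ (ρ : Measure ℝ), (∫ x, indicator (Iic t) (fun _ => (1:ℝ)) x ∂ρ)
      = (ρ (Iic t)).toReal := by
    intro ρ
    exact integral_indicator_one measurableSet_Iic
  rw [hi ρ₁, hi ρ₂] at huniq
  exact (ENNReal.toReal_eq_toReal_iff' (measure_ne_top ρ₁ _) (measure_ne_top ρ₂ _)).1 huniq

theorem stmt7 (a : ℕ → ℝ) (μ ν : Measure ℝ) (κ : ℕ) (hκ : 2 ≤ κ)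
    (hμ : IsRepMeas a μ)
    (hν : IsRepMeas (fun n => a n ^ (1 / (κ : ℝ))) ν)
    (α β γ : ℝ) (hγ : IsLUB (msupport ν) γ)
    (hα0 : 0 ≤ α) (hαβ : α < β) (hβγ : β ≤ γ)
    (hhole : ν (Set.Ioo α β) = 0)
    (hstrict : α * γ ^ (κ - 1) < β ^ κ) :
    (μ (Set.Ioo (α * γ ^ (κ - 1)) (β ^ κ)) = 0 ∧ IsLUB (msupport μ) (γ ^ κ)) ∧
    (α ∈ msupport ν ↔ α * γ ^ (κ - 1) ∈ msupport μ) ∧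
    (β ∈ msupport ν ↔ β ^ κ ∈ msupport μ) := by
  obtain ⟨m, rfl⟩ : ∃ m, κ = m + 1 := ⟨κ - 1, by omega⟩
  simp only [Nat.add_sub_cancel] at hstrict ⊢
  obtain ⟨ha0, hμ0, hμmom⟩ := hμ
  obtain ⟨hb0, hν0, hνmom⟩ := hν
  set b : ℕ → ℝ := fun n => a n ^ (1 / ((m+1 : ℕ) : ℝ)) with hbdef
  have hbn : ∀ n, 0 ≤ b n := hb0
  have hκR : ((m+1 : ℕ) : ℝ) ≠ 0 := by positivity
  have hba : ∀ n, b n ^ (m+1) = a n := by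
    intro n
    rw [hbdef]
    rw [← Real.rpow_natCast (a n ^ (1 / ((m+1 : ℕ) : ℝ))) (m+1),
      ← Real.rpow_mul (ha0 n), one_div_mul_cancel hκR, Real.rpow_one]
  -- finiteness
  haveI hfinμ : IsFiniteMeasure μ := by
    constructor
    have h := hμmom 0
    simp only [pow_zero, ENNReal.ofReal_one, lintegral_one] at h
    rw [h]
    exact ENNReal.ofReal_lt_top
  haveI hfinν : IsFiniteMeasure ν := by
    constructor
    have h := hνmom 0
    simp only [pow_zero, ENNReal.ofReal_one, lintegral_one] at h
    rw [h]
    exact ENNReal.ofReal_lt_top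
  have hβpos : 0 < β := lt_of_le_of_lt hα0 hαβ
  have hγpos : 0 < γ := lt_of_lt_of_le hβpos hβγ
  have hαγ : α ≤ γ := le_of_lt (lt_of_lt_of_le hαβ hβγ)
  -- ν is concentrated on Icc 0 α ∪ Icc β γ
  have hνγ : ν (Ioi γ) = 0 := by
    refine null_of_disjoint_msupport ν isOpen_Ioi (Set.disjoint_left.2 fun x hx hxs => ?_)
    exact absurd (hγ.1 hxs) (not_le.2 hx)
  have hνconc : ν ((Icc 0 α ∪ Icc β γ)ᶜ) = 0 := by
    have hsub : (Icc 0 α ∪ Icc β γ)ᶜ ⊆ (Iio 0 ∪ Ioo α β) ∪ Ioi γ := by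
      intro x hx
      simp only [mem_compl_iff, mem_union, mem_Icc, not_or, not_and_or, not_le] at hx
      simp only [mem_union, mem_Iio, mem_Ioo, mem_Ioi]
      obtain ⟨h1, h2⟩ := hx
      rcases h1 with h | h
      · exact Or.inl (Or.inl h)
      rcases h2 with h' | h'
      · exact Or.inl (Or.inr ⟨h, h'⟩)
      · exact Or.inr h'
    exact measure_mono_null hsub (measure_union_null (measure_union_null hν0 hhole) hνγ)
  -- ν moments
  have hνmom' : ∀ n : ℕ, ∫⁻ x, ENNReal.ofReal (x ^ n) ∂ν = ENNReal.ofReal (b n) := hνmom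
  have hνuniv : ν univ = ENNReal.ofReal (b 0) := by
    have h := hνmom' 0
    simpa using h
  -- moments of the convolution power
  have hlammom : ∀ n : ℕ, ∫⁻ x, ENNReal.ofReal (x ^ n) ∂(mpow ν (m+1)) = ENNReal.ofReal (a n) := by
    intro n
    rw [mpow_moment ν hν0 (m+1) n, hνmom' n, ← ENNReal.ofReal_pow (hbn n), hba n]
  -- concentration of the convolution power
  have hlamconc := mpow_concentration ν hγpos.le hαγ hβpos.le hνconc m
  have hUsub : Icc 0 (α * γ ^ m) ∪ Icc (β ^ (m+1)) (γ ^ (m+1)) ⊆ Icc 0 (γ ^ (m+1)) := by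
    intro x hx
    rcases hx with hx | hx
    · refine ⟨hx.1, le_trans hx.2 ?_⟩
      calc α * γ ^ m ≤ γ * γ ^ m :=
            mul_le_mul_of_nonneg_right hαγ (pow_nonneg hγpos.le m)
        _ = γ ^ (m+1) := (pow_succ' γ m).symm
    · exact ⟨le_trans (pow_nonneg hβpos.le _) hx.1, hx.2⟩
  have hlamIcc : (mpow ν (m+1)) ((Icc 0 (γ ^ (m+1)))ᶜ) = 0 :=
    measure_mono_null (compl_subset_compl.2 hUsub) hlamconc
  have hlam0 : (mpow ν (m+1)) (Iio 0) = 0 := by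
    refine measure_mono_null ?_ hlamIcc
    intro x hx
    simp only [mem_compl_iff, mem_Icc, not_and_or, not_le]
    exact Or.inl hx
  -- b n ≤ γ ^ n * b 0  and  a n ≤ a 0 * (γ ^ (m+1)) ^ n
  have hbbound : ∀ n : ℕ, b n ≤ γ ^ n * b 0 := by
    intro n
    have hae : ∀ᵐ x ∂ν, x ∈ Icc 0 α ∪ Icc β γ := by
      rw [ae_iff]; exact hνconc
    have h1 : ∫⁻ x, ENNReal.ofReal (x ^ n) ∂ν ≤ ∫⁻ _, ENNReal.ofReal (γ ^ n) ∂ν := by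
      refine lintegral_mono_ae ?_
      filter_upwards [hae] with x hx
      have hx' : 0 ≤ x ∧ x ≤ γ := by
        rcases hx with hx | hx
        · exact ⟨hx.1, le_trans hx.2 hαγ⟩
        · exact ⟨le_trans hβpos.le hx.1, hx.2⟩
      exact ENNReal.ofReal_le_ofReal (pow_le_pow_left₀ hx'.1 hx'.2 n)
    rw [lintegral_const, hνuniv, hνmom' n,
      ← ENNReal.ofReal_mul (pow_nonneg hγpos.le n)] at h1
    exact (ENNReal.ofReal_le_ofReal_iff (mul_nonneg (pow_nonneg hγpos.le n) (hbn 0))).1 h1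
  have habound : ∀ n : ℕ, a n ≤ a 0 * (γ ^ (m+1)) ^ n := by
    intro n
    calc a n = b n ^ (m+1) := (hba n).symm
      _ ≤ (γ ^ n * b 0) ^ (m+1) := pow_le_pow_left₀ (hbn n) (hbbound n) (m+1)
      _ = a 0 * (γ ^ (m+1)) ^ n := by
          rw [mul_pow, ← pow_mul, ← pow_mul, hba 0]
          ring_nf
  -- μ has no mass above γ ^ (m+1)
  have hμtail : μ (Ioi (γ ^ (m+1))) = 0 := by
    refine tail_null μ (pow_pos hγpos (m+1)) (ha0 0) fun n => ?_
    rw [hμmom n]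
    exact ENNReal.ofReal_le_ofReal (habound n)
  have hμconc : μ ((Icc 0 (γ ^ (m+1)))ᶜ) = 0 := by
    have hsub : (Icc 0 (γ ^ (m+1)))ᶜ ⊆ Iio 0 ∪ Ioi (γ ^ (m+1)) := by
      intro x hx
      simp only [mem_compl_iff, mem_Icc, not_and_or, not_le] at hx
      simpa only [mem_union, mem_Iio, mem_Ioi] using hx
    exact measure_mono_null hsub (measure_union_null hμ0 hμtail)
  -- μ equals the convolution power
  haveI : IsFiniteMeasure (mpow ν (m+1)) := mpow_finite ν (m+1)
  have hμeq : μ = mpow ν (m+1) := by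
    refine ext_of_moments μ (mpow ν (m+1)) (pow_nonneg hγpos.le (m+1)) hμconc hlamIcc fun n => ?_
    rw [real_moment μ hμ0 (ha0 n) n (hμmom n),
      real_moment (mpow ν (m+1)) hlam0 (ha0 n) n (hlammom n)]
  rw [hμeq]
  have hγmem : γ ∈ msupport ν := mem_msupport_of_isLUB hγ
  have hθ3mem : γ ^ (m+1) ∈ msupport (mpow ν (m+1)) := pow_mem_msupport_mpow ν hγmem (m+1)
  refine ⟨⟨?_, ?_⟩, ⟨?_, ?_⟩, ⟨?_, ?_⟩⟩
  · -- the hole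
    refine measure_mono_null ?_ hlamconc
    intro x hx
    simp only [mem_Ioo] at hx
    simp only [mem_compl_iff, mem_union, mem_Icc, not_or, not_and_or, not_le]
    exact ⟨Or.inr hx.1, Or.inl hx.2⟩
  · -- IsLUB
    have hsub := msupport_subset_of_null_compl isClosed_Icc hlamIcc
    exact ⟨fun x hx => (hsub hx).2, fun c hc => hc hθ3mem⟩
  · -- α ∈ supp ν → θ1 ∈ supp μ
    intro hα
    exact mul_pow_mem_msupport_mpow ν hα hγmem m
  · -- θ1 ∈ supp μ → α ∈ supp ν
    intro hθ1
    by_contra hα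
    simp only [msupport, mem_setOf_eq, not_forall] at hα
    obtain ⟨U, hUopen, hUmem, hUpos⟩ := hα
    have hUnull : ν U = 0 := by simpa using hUpos
    obtain ⟨δ, hδpos, hball⟩ := Metric.isOpen_iff.1 hUopen α hUmem
    rw [Real.ball_eq_Ioo] at hball
    have hballnull : ν (Ioo (α - δ) (α + δ)) = 0 := measure_mono_null hball hUnull
    have hconc' : ν ((Icc 0 (α - δ) ∪ Icc β γ)ᶜ) = 0 := by
      have hsub : (Icc 0 (α - δ) ∪ Icc β γ)ᶜ ⊆
          ((Iio 0 ∪ Ioo (α - δ) (α + δ)) ∪ Ioo α β) ∪ Ioi γ := by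
        intro x hx
        simp only [mem_compl_iff, mem_union, mem_Icc, not_or, not_and_or, not_le] at hx
        simp only [mem_union, mem_Iio, mem_Ioo, mem_Ioi]
        obtain ⟨h1, h2⟩ := hx
        rcases h1 with h | h
        · exact Or.inl (Or.inl (Or.inl h))
        rcases h2 with h' | h'
        · by_cases hc : x < α + δ
          · exact Or.inl (Or.inl (Or.inr ⟨h, hc⟩))
          · push_neg at hc
            exact Or.inl (Or.inr ⟨by linarith, h'⟩)
        · exact Or.inr h'
      exact measure_mono_null hsub (measure_union_null (measure_union_null
        (measure_union_null hν0 hballnull) hhole) hνγ)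
    have hconc2 := mpow_concentration ν hγpos.le (by linarith) hβpos.le hconc' m
    have hnull : (mpow ν (m+1)) (Ioo ((α - δ) * γ ^ m) (β ^ (m+1))) = 0 := by
      refine measure_mono_null ?_ hconc2
      intro x hx
      simp only [mem_Ioo] at hx
      simp only [mem_compl_iff, mem_union, mem_Icc, not_or, not_and_or, not_le]
      exact ⟨Or.inr hx.1, Or.inl hx.2⟩
    have hmem : α * γ ^ m ∈ Ioo ((α - δ) * γ ^ m) (β ^ (m+1)) := by
      constructor
      · have : (0:ℝ) < γ ^ m := pow_pos hγpos m
        nlinarith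
      · exact hstrict
    have := hθ1 _ isOpen_Ioo hmem
    rw [hnull] at this
    exact lt_irrefl _ this
  · -- β ∈ supp ν → θ2 ∈ supp μ
    intro hβ
    exact pow_mem_msupport_mpow ν hβ (m+1)
  · -- θ2 ∈ supp μ → β ∈ supp ν
    intro hθ2
    by_contra hβ
    simp only [msupport, mem_setOf_eq, not_forall] at hβ
    obtain ⟨U, hUopen, hUmem, hUpos⟩ := hβ
    have hUnull : ν U = 0 := by simpa using hUpos
    obtain ⟨δ, hδpos, hball⟩ := Metric.isOpen_iff.1 hUopen β hUmem
    rw [Real.ball_eq_Ioo] at hball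
    have hballnull : ν (Ioo (β - δ) (β + δ)) = 0 := measure_mono_null hball hUnull
    have hconc' : ν ((Icc 0 α ∪ Icc (β + δ/2) γ)ᶜ) = 0 := by
      have hsub : (Icc 0 α ∪ Icc (β + δ/2) γ)ᶜ ⊆
          ((Iio 0 ∪ Ioo (β - δ) (β + δ)) ∪ Ioo α β) ∪ Ioi γ := by
        intro x hx
        simp only [mem_compl_iff, mem_union, mem_Icc, not_or, not_and_or, not_le] at hx
        simp only [mem_union, mem_Iio, mem_Ioo, mem_Ioi]
        obtain ⟨h1, h2⟩ := hx
        rcases h1 with h | h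
        · exact Or.inl (Or.inl (Or.inl h))
        rcases h2 with h' | h'
        · by_cases hc : x < β
          · exact Or.inl (Or.inr ⟨h, hc⟩)
          · push_neg at hc
            exact Or.inl (Or.inl (Or.inr ⟨by linarith, by linarith⟩))
        · exact Or.inr h'
      exact measure_mono_null hsub (measure_union_null (measure_union_null
        (measure_union_null hν0 hballnull) hhole) hνγ)
    have hconc2 := mpow_concentration ν hγpos.le hαγ (by linarith) hconc' m
    have hnull : (mpow ν (m+1)) (Ioo (α * γ ^ m) ((β + δ/2) ^ (m+1))) = 0 := by
      refine measure_mono_null ?_ hconc2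
      intro x hx
      simp only [mem_Ioo] at hx
      simp only [mem_compl_iff, mem_union, mem_Icc, not_or, not_and_or, not_le]
      exact ⟨Or.inr hx.1, Or.inl hx.2⟩
    have hmem : β ^ (m+1) ∈ Ioo (α * γ ^ m) ((β + δ/2) ^ (m+1)) := by
      constructor
      · exact hstrict
      · exact pow_lt_pow_left₀ (by linarith) hβpos.le (by omega)
    have := hθ2 _ isOpen_Ioo hmem
    rw [hnull] at this
    exact lt_irrefl _ this
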